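/- Let H and h be nonnegative continuous functions on (0,1], let 0 < ε < 1/4, θ ∈ (0,1/4), and let ω : [0,1] → [0,∞) be increasing with ω(0) = 0 and ∫_0^1 ω(t)/t dt < ∞. Suppose there is C_0 such that: (i) max_{r ≤ t ≤ 2r} H(t) ≤ C_0 H(2r) and max_{r ≤ t,s ≤ 2r} |h(t) − h(s)| ≤ C_0 H(2r) for all r ∈ [ε, 1/2]; (ii) H(θr) ≤ (1/2) H(r) + C_0 ω(ε/r) (H(2r) + h(2r)) for all r ∈ [θ^{−1}ε, 1/2]. Then max_{ε ≤ r ≤ 1} (H(r) + h(r)) ≤ C (H(1) + h(1)), with C depending only on C_0, θ, ω. -/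

import Mathlib

set_option maxHeartbeats 1000000


open MeasureTheory Metric Filter Real
noncomputable section

/-- abstract iteration lemma with a Dini modulus `ω`. -/
theorem stmt_12 (C₀ θ : ℝ) (hC₀ : 0 < C₀) (hθ : θ ∈ Set.Ioo (0 : ℝ) (1/4))
    (ω : ℝ → ℝ) (hω0 : ω 0 = 0) (hωnn : ∀ t ∈ Set.Icc (0 : ℝ) 1, 0 ≤ ω t)
    (hωmono : MonotoneOn ω (Set.Icc (0 : ℝ) 1))
    (hDini : IntegrableOn (fun t => ω t / t) (Set.Ioc (0 : ℝ) 1)) :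
    ∃ C > 0, ∀ (ε : ℝ), 0 < ε → ε < 1/4 → ∀ (H h : ℝ → ℝ),
      ContinuousOn H (Set.Ioc 0 1) → ContinuousOn h (Set.Ioc 0 1) →
      (∀ t ∈ Set.Ioc (0 : ℝ) 1, 0 ≤ H t) → (∀ t ∈ Set.Ioc (0 : ℝ) 1, 0 ≤ h t) →
      (∀ r ∈ Set.Icc ε (1/2), ∀ t ∈ Set.Icc r (2*r), H t ≤ C₀ * H (2*r)) →
      (∀ r ∈ Set.Icc ε (1/2), ∀ t ∈ Set.Icc r (2*r), ∀ s ∈ Set.Icc r (2*r),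
        |h t - h s| ≤ C₀ * H (2*r)) →
      (∀ r ∈ Set.Icc (θ⁻¹ * ε) (1/2),
        H (θ*r) ≤ (1/2) * H r + C₀ * ω (ε/r) * (H (2*r) + h (2*r))) →
      ∀ r ∈ Set.Icc ε 1, H r + h r ≤ C * (H 1 + h 1) := by
  classical
  obtain ⟨hθ0, hθ4⟩ := hθ
  have hθ1 : θ < 1 := by linarith
  have hθne : θ ≠ 0 := ne_of_gt hθ0
  have hθinv4 : (4:ℝ) < θ⁻¹ := by
    rw [show (4:ℝ) = ((1:ℝ)/4)⁻¹ by norm_num]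
    exact inv_strictAnti₀ hθ0 hθ4
  have hθinv0 : (0:ℝ) < θ⁻¹ := by positivity
  have hp : ∀ m:ℕ, 0 < θ^m := fun m => pow_pos hθ0 m
  have hp1 : ∀ m:ℕ, θ^m ≤ 1 := fun m => pow_le_one₀ hθ0.le hθ1.le
  have hpowsucc : ∀ m:ℕ, θ^(m+1) = θ * θ^m := fun m => by rw [pow_succ]; ring
  have hpowdec : ∀ m:ℕ, θ^(m+1) ≤ θ^m := fun m => by nlinarith [hp m, hpowsucc m]
  obtain ⟨C₁, hC₁def⟩ : ∃ x:ℝ, x = max C₀ 1 := ⟨_, rfl⟩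
  have hC₁1 : (1:ℝ) ≤ C₁ := hC₁def ▸ le_max_right _ _
  have hC₀C₁ : C₀ ≤ C₁ := hC₁def ▸ le_max_left _ _
  have hC₁0 : (0:ℝ) < C₁ := by linarith
  obtain ⟨N, hN0⟩ : ∃ N : ℕ, θ⁻¹^2 < (2:ℝ) ^ N := pow_unbounded_of_one_lt _ one_lt_two
  have hN : θ⁻¹^2 ≤ (2:ℝ)^N := hN0.le
  have h2N0 : (0:ℝ) < 2^N := by positivity
  have h2N16 : (16:ℝ) ≤ 2^N := by nlinarith [sq_nonneg (θ⁻¹ - 4)]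
  have hNθ2 : (1:ℝ) ≤ θ^2 * 2^N := by
    have e : θ^2 * θ⁻¹^2 = 1 := by
      rw [← mul_pow, mul_inv_cancel₀ hθne, one_pow]
    nlinarith [mul_le_mul_of_nonneg_left hN (sq_nonneg θ)]
  have hNθ : (4:ℝ) ≤ θ * 2^N := by
    have e : θ⁻¹ * (θ^2 * 2^N) = θ * 2^N := by field_simp
    nlinarith [mul_le_mul_of_nonneg_left hNθ2 hθinv0.le]
  have h1θ : (0:ℝ) < 1 - θ := by linarith
  obtain ⟨W, hWdef⟩ : ∃ x:ℝ, x = (1-θ)⁻¹ * ∫ t in Set.Ioc (0:ℝ) 1, ω t / t := ⟨_, rfl⟩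
  -- Dini sum bound
  have hωsum : ∀ m : ℕ, ∑ j ∈ Finset.range m, ω (θ^(j+1)) ≤ W := by
    have hpiece : ∀ m : ℕ, IntegrableOn (fun t => ω t / t) (Set.Ioc (θ^(m+1)) (θ^m)) :=
      fun m => hDini.mono_set (Set.Ioc_subset_Ioc (hp (m+1)).le (hp1 m))
    have key : ∀ m : ℕ, (∑ j ∈ Finset.range m, ω (θ^(j+1))) * (1-θ) ≤ ∫ t in Set.Ioc (θ^m) 1, ω t / t := by
      intro m
      induction m with
      | zero => simp
      | succ m ih =>
        have hdisj : Disjoint (Set.Ioc (θ^(m+1)) (θ^m)) (Set.Ioc (θ^m) 1) := Set.Ioc_disjoint_Ioc_of_le le_rfl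
        have hunion : Set.Ioc (θ^(m+1)) (θ^m) ∪ Set.Ioc (θ^m) 1 = Set.Ioc (θ^(m+1)) 1 :=
          Set.Ioc_union_Ioc_eq_Ioc (hpowdec m) (hp1 m)
        have hIm : IntegrableOn (fun t => ω t / t) (Set.Ioc (θ^m) 1) :=
          hDini.mono_set (Set.Ioc_subset_Ioc (hp m).le le_rfl)
        have hsplit : (∫ t in Set.Ioc (θ^(m+1)) 1, ω t / t)
            = (∫ t in Set.Ioc (θ^(m+1)) (θ^m), ω t / t) + ∫ t in Set.Ioc (θ^m) 1, ω t / t := by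
          rw [← hunion, setIntegral_union hdisj measurableSet_Ioc (hpiece m) hIm]
        have hconst : (∫ _t in Set.Ioc (θ^(m+1)) (θ^m), (ω (θ^(m+1)) / θ^m))
            = (θ^m - θ^(m+1)) * (ω (θ^(m+1)) / θ^m) := by
          rw [setIntegral_const, measureReal_def, Real.volume_Ioc,
            ENNReal.toReal_ofReal (by linarith [hpowdec m] : (0:ℝ) ≤ θ^m - θ^(m+1))]
          rw [smul_eq_mul]
        have hmono : (∫ _t in Set.Ioc (θ^(m+1)) (θ^m), (ω (θ^(m+1)) / θ^m))
            ≤ ∫ t in Set.Ioc (θ^(m+1)) (θ^m), ω t / t := by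
          apply setIntegral_mono_on ?_ (hpiece m) measurableSet_Ioc ?_
          · exact integrableOn_const (by rw [Real.volume_Ioc]; exact ENNReal.ofReal_ne_top)
          · intro t ht
            have ht1 : θ^(m+1) < t := ht.1
            have ht2 : t ≤ θ^m := ht.2
            have htpos : 0 < t := (hp (m+1)).trans ht1
            exact div_le_div₀ (hωnn t ⟨htpos.le, ht2.trans (hp1 m)⟩)
              (hωmono ⟨(hp (m+1)).le, hp1 (m+1)⟩ ⟨htpos.le, ht2.trans (hp1 m)⟩ ht1.le) htpos ht2
        have hlow : ω (θ^(m+1)) * (1-θ) ≤ ∫ t in Set.Ioc (θ^(m+1)) (θ^m), ω t / t := by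
          rw [hconst] at hmono
          have e : ω (θ^(m+1)) * (1-θ) = (θ^m - θ^(m+1)) * (ω (θ^(m+1)) / θ^m) := by
            field_simp
            ring
          rw [e]; exact hmono
        calc (∑ j ∈ Finset.range (m+1), ω (θ^(j+1))) * (1-θ)
            = (∑ j ∈ Finset.range m, ω (θ^(j+1))) * (1-θ) + ω (θ^(m+1)) * (1-θ) := by
              rw [Finset.sum_range_succ]; ring
          _ ≤ (∫ t in Set.Ioc (θ^m) 1, ω t / t) + ∫ t in Set.Ioc (θ^(m+1)) (θ^m), ω t / t :=
              add_le_add ih hlow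
          _ = ∫ t in Set.Ioc (θ^(m+1)) 1, ω t / t := by rw [hsplit]; ring
    intro m
    have h2 : (∫ t in Set.Ioc (θ^m) 1, ω t / t) ≤ ∫ t in Set.Ioc (0:ℝ) 1, ω t / t := by
      apply setIntegral_mono_set hDini
      · exact (ae_restrict_iff' measurableSet_Ioc).2
          (ae_of_all _ (fun t ht => div_nonneg (hωnn t ⟨ht.1.le, ht.2⟩) ht.1.le))
      · exact HasSubset.Subset.eventuallyLE (Set.Ioc_subset_Ioc_left (hp m).le)
    have h3 := (key m).trans h2
    rw [hWdef]
    rw [show (∑ j ∈ Finset.range m, ω (θ^(j+1)))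
        = (1-θ)⁻¹ * ((∑ j ∈ Finset.range m, ω (θ^(j+1))) * (1-θ)) by field_simp]
    exact mul_le_mul_of_nonneg_left h3 (inv_nonneg.2 h1θ.le)
  have hW0 : (0:ℝ) ≤ W := by simpa using hωsum 0
  clear hWdef hDini
  -- constants
  obtain ⟨C₂, hC₂def⟩ : ∃ x:ℝ, x = C₁^(N+1) := ⟨_, rfl⟩
  obtain ⟨C₃, hC₃def⟩ : ∃ x:ℝ, x = ((N:ℝ)+1) * C₁^(N+2) := ⟨_, rfl⟩
  have hC₂1 : (1:ℝ) ≤ C₂ := by rw [hC₂def]; exact one_le_pow₀ hC₁1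
  have hC₂0 : (0:ℝ) < C₂ := by linarith
  have hC₃0 : (0:ℝ) ≤ C₃ := by rw [hC₃def]; positivity
  obtain ⟨C₆, hC₆def⟩ : ∃ x:ℝ, x = C₂ + 2*C₃ + 1 := ⟨_, rfl⟩
  have hC₆1 : (1:ℝ) ≤ C₆ := by rw [hC₆def]; linarith
  have hC₆0 : (0:ℝ) < C₆ := by linarith
  obtain ⟨C₈, hC₈def⟩ : ∃ x:ℝ, x = Real.exp (2*(C₁*C₆)*W) * (1+2*C₂) := ⟨_, rfl⟩
  have hexp0 : (0:ℝ) < Real.exp (2*(C₁*C₆)*W) := Real.exp_pos _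
  have hC₈0 : (0:ℝ) < C₈ := by rw [hC₈def]; nlinarith
  refine ⟨C₆*C₈ + C₂ + C₃ + 1, by nlinarith [mul_pos hC₆0 hC₈0], ?_⟩
  intro ε hε0 hε14 H h Hcont hcont Hnn hnn hyp1 hyp2 hyp3
  clear Hcont hcont hω0
  have HnnP : ∀ t:ℝ, 0 < t → t ≤ 1 → 0 ≤ H t := fun t h1 h2 => Hnn t ⟨h1, h2⟩
  have hnnP : ∀ t:ℝ, 0 < t → t ≤ 1 → 0 ≤ h t := fun t h1 h2 => hnn t ⟨h1, h2⟩
  have hA0 : 0 ≤ H 1 + h 1 := add_nonneg (HnnP 1 one_pos le_rfl) (hnnP 1 one_pos le_rfl)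
  -- upgraded hypotheses with C₁
  have hyp1' : ∀ r, ε ≤ r → r ≤ 1/2 → ∀ t, r ≤ t → t ≤ 2*r → H t ≤ C₁ * H (2*r) := by
    intro r h1 h2 t h3 h4
    have hH2r : 0 ≤ H (2*r) := HnnP _ (by linarith) (by linarith)
    have := hyp1 r ⟨h1, h2⟩ t ⟨h3, h4⟩
    linarith [mul_le_mul_of_nonneg_right hC₀C₁ hH2r]
  have hyp2' : ∀ r, ε ≤ r → r ≤ 1/2 → ∀ t, r ≤ t → t ≤ 2*r → ∀ s, r ≤ s → s ≤ 2*r →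
      |h t - h s| ≤ C₁ * H (2*r) := by
    intro r h1 h2 t h3 h4 s h5 h6
    have hH2r : 0 ≤ H (2*r) := HnnP _ (by linarith) (by linarith)
    have := hyp2 r ⟨h1, h2⟩ t ⟨h3, h4⟩ s ⟨h5, h6⟩
    linarith [mul_le_mul_of_nonneg_right hC₀C₁ hH2r]
  have hyp3' : ∀ r, θ⁻¹*ε ≤ r → r ≤ 1/2 →
      H (θ*r) ≤ (1/2) * H r + C₁ * ω (ε/r) * (H (2*r) + h (2*r)) := by
    intro r h1 h2
    have hr0 : 0 < r := lt_of_lt_of_le (by positivity) h1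
    have hεr : ε ≤ θ * r := by
      have h := mul_le_mul_of_nonneg_left h1 hθ0.le
      rwa [show θ*(θ⁻¹*ε) = ε by field_simp] at h
    have hεr1 : ε / r ≤ 1 := by
      rw [div_le_one hr0]
      nlinarith [mul_nonneg (show (0:ℝ) ≤ 1-θ by linarith) hr0.le]
    have hω0' : 0 ≤ ω (ε/r) := hωnn _ ⟨by positivity, hεr1⟩
    have hB : 0 ≤ H (2*r) + h (2*r) :=
      add_nonneg (HnnP _ (by linarith) (by linarith)) (hnnP _ (by linarith) (by linarith))
    have h3 := hyp3 r ⟨h1, h2⟩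
    have hmm := mul_le_mul_of_nonneg_right (mul_le_mul_of_nonneg_right hC₀C₁ hω0') hB
    linarith [hmm]
  -- chain lemma
  have chain : ∀ n : ℕ, ∀ t s : ℝ, ε ≤ t → t ≤ s → s ≤ 1 → 2*ε ≤ s → s ≤ 2^n * t →
      H t ≤ C₁^(n+1) * H s ∧ |h t - h s| ≤ ((n:ℝ)+1) * C₁^(n+2) * H s := by
    intro n
    induction n with
    | zero =>
      intro t s h1 h2 h3 h4 h5
      have hst : s = t := le_antisymm (by simpa using h5) h2
      subst hst
      have hHs : 0 ≤ H s := HnnP s (by linarith) h3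
      constructor
      · have h9 : (1:ℝ)*H s ≤ C₁*H s := mul_le_mul_of_nonneg_right hC₁1 hHs
        simpa using h9
      · simp only [sub_self, abs_zero]
        positivity
    | succ n ih =>
      intro t s h1 h2 h3 h4 h5
      have ht0 : 0 < t := lt_of_lt_of_le hε0 h1
      have hHs : 0 ≤ H s := HnnP s (by linarith) h3
      have hn0 : (0:ℝ) ≤ (n:ℝ)+1 := by positivity
      have hpow : C₁ ≤ C₁^(n+1+1) := le_self_pow₀ hC₁1 (by omega)
      have hpow3 : C₁^(n+1+1) ≤ C₁^(n+1+2) := pow_le_pow_right₀ hC₁1 (by omega)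
      have hpowC : C₁ ≤ C₁^(n+1+2) := hpow.trans hpow3
      have hone : C₁^(n+1+1) * H s ≤ C₁^(n+1+2) * H s := mul_le_mul_of_nonneg_right hpow3 hHs
      have hc : ((n:ℝ)+1) * C₁^(n+2) * H s ≤ ((n:ℝ)+1) * C₁^(n+1+2) * H s := by
        have := mul_le_mul_of_nonneg_right
          (mul_le_mul_of_nonneg_left (pow_le_pow_right₀ hC₁1 (show n+2 ≤ n+1+2 by omega)) hn0) hHs
        linarith [this]
      by_cases hcase : s ≤ 2*t
      · have e0 : 2*(s/2) = s := by ring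
        have e1 : H t ≤ C₁ * H s := by
          have := hyp1' (s/2) (by linarith) (by linarith) t (by linarith) (by linarith)
          rwa [e0] at this
        have e2 : |h t - h s| ≤ C₁ * H s := by
          have := hyp2' (s/2) (by linarith) (by linarith) t (by linarith) (by linarith)
            s (by linarith) (by linarith)
          rwa [e0] at this
        have hCs : C₁ * H s ≤ C₁^(n+1+2) * H s := mul_le_mul_of_nonneg_right hpowC hHs
        have hCs1 : C₁ * H s ≤ C₁^(n+1+1) * H s := mul_le_mul_of_nonneg_right hpow hHs
        constructor
        · linarith
        · have hnn2 : 0 ≤ ((n:ℝ)+1) * C₁^(n+1+2) * H s := by positivity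
          push_cast
          linarith
      · push_neg at hcase
        have e1 : H t ≤ C₁ * H (2*t) := hyp1' t h1 (by linarith) t le_rfl (by linarith)
        have e2 : |h t - h (2*t)| ≤ C₁ * H (2*t) :=
          hyp2' t h1 (by linarith) t le_rfl (by linarith) (2*t) (by linarith) le_rfl
        have hratio : s ≤ 2^n * (2*t) := by
          rw [pow_succ] at h5; linarith
        obtain ⟨f1, f2⟩ := ih (2*t) s (by linarith) (by linarith) h3 h4 hratio
        have hH2t : 0 ≤ H (2*t) := HnnP _ (by linarith) (by linarith)
        have f1' : C₁ * H (2*t) ≤ C₁^(n+1+1) * H s := by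
          calc C₁ * H (2*t) ≤ C₁ * (C₁^(n+1) * H s) := mul_le_mul_of_nonneg_left f1 hC₁0.le
            _ = C₁^(n+1+1) * H s := by ring
        constructor
        · calc H t ≤ C₁ * H (2*t) := e1
            _ ≤ C₁^(n+1+1) * H s := f1'
        · have habs : |h t - h s| ≤ |h t - h (2*t)| + |h (2*t) - h s| := abs_sub_le _ _ _
          push_cast
          linarith
  have chainH : ∀ t s : ℝ, ε ≤ t → t ≤ s → s ≤ 1 → 2*ε ≤ s → s ≤ 2^N * t →
      H t ≤ C₂ * H s := by
    intro t s h1 h2 h3 h4 h5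
    rw [hC₂def]
    exact (chain N t s h1 h2 h3 h4 h5).1
  have chainh : ∀ t s : ℝ, ε ≤ t → t ≤ s → s ≤ 1 → 2*ε ≤ s → s ≤ 2^N * t →
      h t ≤ h s + C₃ * H s := by
    intro t s h1 h2 h3 h4 h5
    have h6 := (chain N t s h1 h2 h3 h4 h5).2
    have h7 := le_abs_self (h t - h s)
    rw [hC₃def]
    linarith
  -- grid machinery
  have hstep1 : ∀ m:ℕ, 2*(θ⁻¹*ε) ≤ θ^m → 2*ε ≤ θ^(m+1) := by
    intro m hm
    have hmm := mul_le_mul_of_nonneg_left hm hθ0.le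
    have e : θ*(2*(θ⁻¹*ε)) = 2*ε := by
      rw [show θ*(2*(θ⁻¹*ε)) = 2*((θ*θ⁻¹)*ε) by ring, mul_inv_cancel₀ hθne, one_mul]
    rw [e] at hmm
    calc 2*ε ≤ θ*θ^m := hmm
      _ = θ^(m+1) := (hpowsucc m).symm
  have hstep8 : ∀ m:ℕ, 2*(θ⁻¹*ε) ≤ θ^m → 8*ε ≤ θ^m := by
    intro m hm
    linarith [mul_nonneg (show (0:ℝ) ≤ θ⁻¹-4 by linarith) hε0.le]
  obtain ⟨V, hVdef⟩ : ∃ V : ℕ → ℝ,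
      V = fun m => (H 1 + h 1) + ∑ j ∈ Finset.range (m+1), H (θ^j/2) := ⟨_, rfl⟩
  have hVeq : ∀ m, V m = (H 1 + h 1) + ∑ j ∈ Finset.range (m+1), H (θ^j/2) :=
    fun m => by rw [hVdef]
  have hgp : ∀ k:ℕ, 0 ≤ H (θ^k/2) := fun k => HnnP _ (by positivity) (by linarith [hp1 k])
  have hSnn : ∀ m:ℕ, 0 ≤ ∑ j ∈ Finset.range m, H (θ^j/2) :=
    fun m => Finset.sum_nonneg (fun j _ => hgp j)
  have hV0 : ∀ m, 0 ≤ V m := fun m => by rw [hVeq m]; linarith [hSnn (m+1)]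
  have hAV : ∀ m, H 1 + h 1 ≤ V m := fun m => by rw [hVeq m]; linarith [hSnn (m+1)]
  have hSle : ∀ k m : ℕ, k ≤ m →
      (∑ j ∈ Finset.range k, H (θ^j/2)) ≤ ∑ j ∈ Finset.range m, H (θ^j/2) :=
    fun k m hkm => Finset.sum_le_sum_of_subset_of_nonneg (Finset.range_subset_range.2 hkm)
      (fun i _ _ => hgp i)
  have haV : ∀ k m : ℕ, k ≤ m → H (θ^k/2) ≤ V m := by
    intro k m hkm
    have h1 : H (θ^k/2) ≤ ∑ j ∈ Finset.range (m+1), H (θ^j/2) :=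
      Finset.single_le_sum (fun i _ => hgp i) (Finset.mem_range.2 (by omega))
    rw [hVeq m]; linarith
  -- h along the grid
  have hgridh : ∀ m:ℕ, (∀ k, k < m → 2*(θ⁻¹*ε) ≤ θ^k) →
      h (θ^m/2) ≤ (1+C₃)*(H 1 + h 1) + C₃ * ∑ j ∈ Finset.range m, H (θ^j/2) := by
    intro m
    induction m with
    | zero =>
      intro _
      have hch := chainh (1/2) 1 (by linarith) (by norm_num) le_rfl (by linarith)
        (by linarith [h2N16])
      have e : θ^(0:ℕ)/2 = 1/2 := by norm_num
      rw [e]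
      simp only [Finset.range_zero, Finset.sum_empty, mul_zero, add_zero]
      have hH1 : 0 ≤ H 1 := HnnP 1 one_pos le_rfl
      have hh1 : 0 ≤ h 1 := hnnP 1 one_pos le_rfl
      have hq := mul_nonneg hC₃0 hh1
      linarith [hch]
    | succ m ih =>
      intro hv
      have hθm : 2*(θ⁻¹*ε) ≤ θ^m := hv m (by omega)
      have h2ε1 : 2*ε ≤ θ^(m+1) := hstep1 m hθm
      have h8ε : 8*ε ≤ θ^m := hstep8 m hθm
      have hc5 : θ^m/2 ≤ 2^N * (θ^(m+1)/2) := by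
        rw [hpowsucc m]
        have h1 := mul_le_mul_of_nonneg_right hNθ (hp m).le
        linarith
      have hch := chainh (θ^(m+1)/2) (θ^m/2) (by linarith) (by linarith [hpowdec m])
        (by linarith [hp1 m]) (by linarith) hc5
      have ihm := ih (fun k hk => hv k (by omega))
      rw [Finset.sum_range_succ]
      have hq := mul_nonneg hC₃0 (hgp m)
      linarith [hch, ihm]
  -- main Gronwall iteration
  have hmain : ∀ m:ℕ, (∀ k, k < m → 2*(θ⁻¹*ε) ≤ θ^k) →
      V m + H (θ^m/2) ≤ ((H 1 + h 1) + 2*H (θ^(0:ℕ)/2))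
        * ∏ k ∈ Finset.range m, (1+2*(C₁*C₆*ω (2*ε/θ^k))) := by
    intro m
    induction m with
    | zero =>
      intro _
      simp only [Finset.range_zero, Finset.prod_empty, mul_one]
      rw [hVeq 0, Finset.sum_range_one]
      linarith
    | succ m ih =>
      intro hv
      have hvm : ∀ k, k < m → 2*(θ⁻¹*ε) ≤ θ^k := fun k hk => hv k (by omega)
      have hθm : 2*(θ⁻¹*ε) ≤ θ^m := hv m (by omega)
      have h8ε : 8*ε ≤ θ^m := hstep8 m hθm
      have hωm1 : 2*ε/θ^m ≤ 1 := by rw [div_le_one (hp m)]; linarith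
      have hωm0 : 0 ≤ ω (2*ε/θ^m) := hωnn _ ⟨by positivity, hωm1⟩
      have h3 := hyp3' (θ^m/2) (by linarith) (by linarith [hp1 m])
      have e1 : θ*(θ^m/2) = θ^(m+1)/2 := by rw [hpowsucc m]; ring
      have e2 : 2*(θ^m/2) = θ^m := by ring
      have e3 : ε/(θ^m/2) = 2*ε/θ^m := by rw [div_div_eq_mul_div, mul_comm ε 2]
      rw [e1, e2, e3] at h3
      have hB : H (θ^m) + h (θ^m) ≤ C₆ * V m := by
        rcases m with _ | k
        · rw [pow_zero]
          have h5 := hAV 0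
          have h6 := hV0 0
          have hq := mul_nonneg (show (0:ℝ) ≤ C₆-1 by linarith) h6
          nlinarith
        · have hθk : 2*(θ⁻¹*ε) ≤ θ^k := hv k (by omega)
          have h2εk : 2*ε ≤ θ^(k+1) := hstep1 k hθk
          have h8εk : 8*ε ≤ θ^k := hstep8 k hθk
          have c2 : θ^(k+1) ≤ θ^k/2 := by
            rw [hpowsucc k]
            nlinarith [hp k]
          have c5 : θ^k/2 ≤ 2^N * θ^(k+1) := by
            rw [hpowsucc k]
            have h1 := mul_le_mul_of_nonneg_right hNθ (hp k).le
            linarith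
          have f1 := chainH (θ^(k+1)) (θ^k/2) (by linarith) c2 (by linarith [hp1 k])
            (by linarith) c5
          have f2 := chainh (θ^(k+1)) (θ^k/2) (by linarith) c2 (by linarith [hp1 k])
            (by linarith) c5
          have f3 := hgridh k (fun j hj => hv j (by omega))
          have hVexp : V (k+1) = (H 1 + h 1) + (∑ j ∈ Finset.range k, H (θ^j/2))
              + H (θ^k/2) + H (θ^(k+1)/2) := by
            rw [hVeq (k+1), Finset.sum_range_succ, Finset.sum_range_succ]; ring
          rw [hVexp, hC₆def]
          have q1 : 0 ≤ (C₂+C₃)*(H 1 + h 1) := mul_nonneg (by linarith) hA0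
          have q2 : 0 ≤ (C₂+C₃+1)*(∑ j ∈ Finset.range k, H (θ^j/2)) :=
            mul_nonneg (by linarith) (hSnn k)
          have q3 : 0 ≤ (C₃+1)*H (θ^k/2) := mul_nonneg (by linarith) (hgp k)
          have q4 : 0 ≤ (C₂+2*C₃+1)*H (θ^(k+1)/2) := mul_nonneg (by linarith) (hgp (k+1))
          linarith [f1, f2, f3, q1, q2, q3, q4]
      have hμnn : 0 ≤ C₁*ω (2*ε/θ^m) := mul_nonneg hC₁0.le hωm0
      have hc : C₁*ω (2*ε/θ^m)*(H (θ^m)+h (θ^m)) ≤ C₁*ω (2*ε/θ^m)*(C₆*V m) :=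
        mul_le_mul_of_nonneg_left hB hμnn
      have key : H (θ^(m+1)/2) ≤ (1/2)*H (θ^m/2) + C₁*C₆*ω (2*ε/θ^m) * V m := by
        linarith [h3, hc]
      have hVs : V (m+1) = V m + H (θ^(m+1)/2) := by
        rw [hVeq (m+1), hVeq m, Finset.sum_range_succ]
        ring
      have hfacnn : (0:ℝ) ≤ 1+2*(C₁*C₆*ω (2*ε/θ^m)) := by
        have hq := mul_nonneg (mul_nonneg hC₁0.le hC₆0.le) hωm0
        linarith
      have hμx : 0 ≤ (C₁*C₆*ω (2*ε/θ^m)) * H (θ^m/2) :=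
        mul_nonneg (mul_nonneg (mul_nonneg hC₁0.le hC₆0.le) hωm0) (hgp m)
      have ihm := ih hvm
      calc V (m+1) + H (θ^(m+1)/2) = V m + 2*H (θ^(m+1)/2) := by rw [hVs]; ring
        _ ≤ V m + H (θ^m/2) + 2*((C₁*C₆*ω (2*ε/θ^m)) * V m) := by linarith [key]
        _ ≤ (1+2*(C₁*C₆*ω (2*ε/θ^m))) * (V m + H (θ^m/2)) := by linarith [hμx]
        _ ≤ (1+2*(C₁*C₆*ω (2*ε/θ^m))) * (((H 1 + h 1) + 2*H (θ^(0:ℕ)/2))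
            * ∏ k ∈ Finset.range m, (1+2*(C₁*C₆*ω (2*ε/θ^k)))) :=
            mul_le_mul_of_nonneg_left ihm hfacnn
        _ = ((H 1 + h 1) + 2*H (θ^(0:ℕ)/2))
            * ∏ k ∈ Finset.range (m+1), (1+2*(C₁*C₆*ω (2*ε/θ^k))) := by
            rw [Finset.prod_range_succ]; ring
  -- product bound
  have hprod : ∀ m:ℕ, (∀ k, k < m → 2*(θ⁻¹*ε) ≤ θ^k) →
      (∏ k ∈ Finset.range m, (1+2*(C₁*C₆*ω (2*ε/θ^k)))) ≤ Real.exp (2*(C₁*C₆)*W) := by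
    intro m hv
    rcases Nat.eq_zero_or_pos m with hm0 | hm0
    · subst hm0
      simp only [Finset.range_zero, Finset.prod_empty]
      have he := Real.add_one_le_exp (2*(C₁*C₆)*W)
      have h0 : 0 ≤ 2*(C₁*C₆)*W :=
        mul_nonneg (mul_nonneg (by norm_num) (mul_nonneg hC₁0.le hC₆0.le)) hW0
      linarith
    · obtain ⟨n, rfl⟩ : ∃ n, m = n+1 := ⟨m-1, by omega⟩
      have h2εm : 2*ε ≤ θ^(n+1) := hstep1 n (hv n (by omega))
      have hωk0 : ∀ k:ℕ, k < n+1 → 0 ≤ ω (2*ε/θ^k) ∧ ω (2*ε/θ^k) ≤ ω (θ^(n+1-k)) := by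
        intro k hk
        have h1 : 2*ε/θ^k ≤ θ^(n+1-k) := by
          rw [div_le_iff₀ (hp k), ← pow_add]
          rw [show (n+1-k)+k = n+1 by omega]
          exact h2εm
        have hmem1 : 2*ε/θ^k ∈ Set.Icc (0:ℝ) 1 := ⟨by positivity, h1.trans (hp1 _)⟩
        have hmem2 : θ^(n+1-k) ∈ Set.Icc (0:ℝ) 1 := ⟨(hp _).le, hp1 _⟩
        exact ⟨hωnn _ hmem1, hωmono hmem1 hmem2 h1⟩
      have step1 : (∏ k ∈ Finset.range (n+1), (1+2*(C₁*C₆*ω (2*ε/θ^k))))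
          ≤ ∏ k ∈ Finset.range (n+1), Real.exp (2*(C₁*C₆*ω (2*ε/θ^k))) := by
        apply Finset.prod_le_prod
        · intro k hk
          have hq1 := (hωk0 k (Finset.mem_range.1 hk)).1
          have hq2 := mul_nonneg (mul_nonneg hC₁0.le hC₆0.le) hq1
          linarith
        · intro k hk
          have hq := Real.add_one_le_exp (2*(C₁*C₆*ω (2*ε/θ^k)))
          linarith
      have step2 : (∏ k ∈ Finset.range (n+1), Real.exp (2*(C₁*C₆*ω (2*ε/θ^k))))
          = Real.exp (∑ k ∈ Finset.range (n+1), 2*(C₁*C₆*ω (2*ε/θ^k))) :=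
        (Real.exp_sum _ _).symm
      have hsum : (∑ k ∈ Finset.range (n+1), ω (2*ε/θ^k)) ≤ W := by
        have hre := Finset.sum_range_reflect (fun k => ω (2*ε/θ^k)) (n+1)
        rw [← hre]
        have hterm : ∀ k ∈ Finset.range (n+1), ω (2*ε/θ^(n+1-1-k)) ≤ ω (θ^(k+1)) := by
          intro k hk
          have hk' := Finset.mem_range.1 hk
          have e : n+1-1-k = n-k := by omega
          rw [e]
          have e2 : n+1-(n-k) = k+1 := by omega
          have hq := (hωk0 (n-k) (by omega)).2
          rwa [e2] at hq
        calc (∑ k ∈ Finset.range (n+1), ω (2*ε/θ^(n+1-1-k)))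
            ≤ ∑ k ∈ Finset.range (n+1), ω (θ^(k+1)) := Finset.sum_le_sum hterm
          _ ≤ W := hωsum (n+1)
      have step3 : (∑ k ∈ Finset.range (n+1), 2*(C₁*C₆*ω (2*ε/θ^k))) ≤ 2*(C₁*C₆)*W := by
        have e : (∑ k ∈ Finset.range (n+1), 2*(C₁*C₆*ω (2*ε/θ^k)))
            = 2*(C₁*C₆) * ∑ k ∈ Finset.range (n+1), ω (2*ε/θ^k) := by
          rw [Finset.mul_sum]
          exact Finset.sum_congr rfl (fun k _ => by ring)
        rw [e]
        exact mul_le_mul_of_nonneg_left hsum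
          (mul_nonneg (by norm_num) (mul_nonneg hC₁0.le hC₆0.le))
      calc (∏ k ∈ Finset.range (n+1), (1+2*(C₁*C₆*ω (2*ε/θ^k))))
          ≤ ∏ k ∈ Finset.range (n+1), Real.exp (2*(C₁*C₆*ω (2*ε/θ^k))) := step1
        _ = Real.exp (∑ k ∈ Finset.range (n+1), 2*(C₁*C₆*ω (2*ε/θ^k))) := step2
        _ ≤ Real.exp (2*(C₁*C₆)*W) := Real.exp_le_exp.2 step3
  -- V bound
  have hVb : ∀ m:ℕ, (∀ k, k < m → 2*(θ⁻¹*ε) ≤ θ^k) → V m ≤ C₈ * (H 1 + h 1) := by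
    intro m hv
    have h1 := hmain m hv
    have h2 := hprod m hv
    have ha0' : H (θ^(0:ℕ)/2) ≤ C₂ * (H 1 + h 1) := by
      have hch := chainH (1/2) 1 (by linarith) (by norm_num) le_rfl (by linarith)
        (by linarith [h2N16])
      have e : θ^(0:ℕ)/2 = 1/2 := by norm_num
      rw [e]
      have hh1 : 0 ≤ h 1 := hnnP 1 one_pos le_rfl
      linarith [mul_nonneg hC₂0.le hh1]
    have hbase0 : 0 ≤ (H 1 + h 1) + 2*H (θ^(0:ℕ)/2) := by linarith [hgp 0]
    have s2 : ((H 1+h 1) + 2*H (θ^(0:ℕ)/2))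
          * (∏ k ∈ Finset.range m, (1+2*(C₁*C₆*ω (2*ε/θ^k))))
        ≤ ((H 1+h 1) + 2*H (θ^(0:ℕ)/2)) * Real.exp (2*(C₁*C₆)*W) :=
      mul_le_mul_of_nonneg_left h2 hbase0
    have s3 : ((H 1+h 1) + 2*H (θ^(0:ℕ)/2)) * Real.exp (2*(C₁*C₆)*W)
        ≤ ((1+2*C₂)*(H 1+h 1)) * Real.exp (2*(C₁*C₆)*W) := by
      apply mul_le_mul_of_nonneg_right _ hexp0.le
      linarith [ha0']
    have h4 : V m ≤ V m + H (θ^m/2) := by linarith [hgp m]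
    calc V m ≤ ((1+2*C₂)*(H 1+h 1)) * Real.exp (2*(C₁*C₆)*W) := by linarith [h1, s2, s3, h4]
      _ = C₈ * (H 1 + h 1) := by rw [hC₈def]; ring
  -- final application
  intro r hr
  obtain ⟨hrε, hr1⟩ := hr
  have hr0 : 0 < r := lt_of_lt_of_le hε0 hrε
  have hH1 : 0 ≤ H 1 := HnnP 1 one_pos le_rfl
  have hh1 : 0 ≤ h 1 := hnnP 1 one_pos le_rfl
  have hCC : (0:ℝ) ≤ C₆*C₈ := mul_nonneg hC₆0.le hC₈0.le
  have hq1 : 0 ≤ (C₆*C₈)*(H 1+h 1) := mul_nonneg hCC hA0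
  have hq2 : 0 ≤ C₂*h 1 := mul_nonneg hC₂0.le hh1
  have hq3 : 0 ≤ C₃*h 1 := mul_nonneg hC₃0 hh1
  by_cases hr2 : 1/2 < r
  · have hrat : 1 ≤ 2^N * r := by
      have hq := mul_le_mul_of_nonneg_left hr2.le h2N0.le
      linarith [h2N16]
    have hH := chainH r 1 hrε hr1 le_rfl (by linarith) hrat
    have hh := chainh r 1 hrε hr1 le_rfl (by linarith) hrat
    linarith [hH, hh]
  · push_neg at hr2
    obtain ⟨n0, hn0⟩ := exists_pow_lt_of_lt_one hr0 hθ1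
    have hex : ∃ M:ℕ, θ^M/2 < r := ⟨n0, by linarith [hp n0]⟩
    have hfind0 : Nat.find hex ≠ 0 := by
      intro h0
      have hsp := Nat.find_spec hex
      rw [h0, pow_zero] at hsp
      linarith
    obtain ⟨m, hm⟩ : ∃ m, Nat.find hex = m+1 := ⟨Nat.find hex - 1, by omega⟩
    have hupper : r ≤ θ^m/2 := by
      have hq := Nat.find_min hex (show m < Nat.find hex by omega)
      linarith [not_lt.1 hq]
    have hlower : θ^(m+1)/2 < r := by
      have hq := Nat.find_spec hex
      rwa [hm] at hq
    have hv : ∀ k, k < m → 2*(θ⁻¹*ε) ≤ θ^k := by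
      intro k hk
      have h1 : θ^m ≤ θ^(k+1) := pow_le_pow_of_le_one hθ0.le hθ1.le (by omega)
      have h2 : 2*ε ≤ θ^(k+1) := by linarith
      have h3 := mul_le_mul_of_nonneg_left h2 hθinv0.le
      have e : θ⁻¹*θ^(k+1) = θ^k := by
        rw [hpowsucc k, ← mul_assoc, inv_mul_cancel₀ hθne, one_mul]
      rw [e] at h3
      linarith
    rcases m with _ | k
    · have hrat : 1 ≤ 2^N * r := by
        have h1 := mul_le_mul_of_nonneg_left hlower.le h2N0.le
        nlinarith [hNθ]
      have hH := chainH r 1 hrε hr1 le_rfl (by linarith) hrat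
      have hh := chainh r 1 hrε hr1 le_rfl (by linarith) hrat
      linarith [hH, hh]
    · have hvk : ∀ j, j < k → 2*(θ⁻¹*ε) ≤ θ^j := fun j hj => hv j (by omega)
      have hθk : 2*(θ⁻¹*ε) ≤ θ^k := hv k (by omega)
      have h8εk := hstep8 k hθk
      have c2 : r ≤ θ^k/2 := hupper.trans (by linarith [hpowdec k])
      have c3 : θ^k/2 ≤ 1 := by linarith [hp1 k]
      have c4 : 2*ε ≤ θ^k/2 := by linarith
      have c5 : θ^k/2 ≤ 2^N * r := by
        have h1 := mul_le_mul_of_nonneg_left hlower.le h2N0.le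
        have e : θ^(k+1+1) = θ^2*θ^k := by ring
        rw [e] at h1
        have h2 := mul_le_mul_of_nonneg_right hNθ2 (hp k).le
        linarith
      have hH := chainH r (θ^k/2) hrε c2 c3 c4 c5
      have hh := chainh r (θ^k/2) hrε c2 c3 c4 c5
      have hgh := hgridh k hvk
      have hVk := hVb k hvk
      have hx : H (θ^k/2) ≤ C₈*(H 1+h 1) := (haV k k le_rfl).trans hVk
      have hS : (∑ j ∈ Finset.range k, H (θ^j/2)) ≤ C₈*(H 1+h 1) := by
        have h1 := hSle k (k+1) (by omega)
        have h2 := hVeq k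
        linarith [hA0, hVk]
      have p1 := mul_le_mul_of_nonneg_left hx (show (0:ℝ) ≤ C₂+C₃ by linarith)
      have p2 := mul_le_mul_of_nonneg_left hS hC₃0
      have p3 : 0 ≤ C₈*(H 1+h 1) := mul_nonneg hC₈0.le hA0
      have p4 : 0 ≤ C₂*(H 1+h 1) := mul_nonneg hC₂0.le hA0
      rw [hC₆def]
      linarith [hH, hh, hgh, p1, p2, p3, p4]
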